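/- Let G : ℝ^M → ℝ and, for n = 1,…,N, let Aₙ, Bₙ : ℝ^M → ℝ be differentiable with Aₙ(x) > 0 and Bₙ(x) > 0. Define H(x) = G(x) + Σₙ Aₙ(x)/Bₙ(x) and W(x, y) = G(x) + Σₙ ([Aₙ(x)]²yₙ + 1/(4[Bₙ(x)]²yₙ)) for y ∈ (0,∞)^N. Suppose (x*, y*) satisfies: (a) y* minimizes y ↦ W(x*, y) over (0,∞)^N (equivalently yₙ* = 1/(2Aₙ(x*)Bₙ(x*)) for all n), and (b) ∇ₓW(x*, y*) = 0. Then ∇H(x*) = 0 and W(x*, y*) = H(x*). -/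

import Mathlib

open Set

section Aux

variable {E : Type*} [NormedAddCommGroup E] [NormedSpace ℝ E]

/-- Derivative of a quotient of scalar functions. -/
lemma aux_hasFDerivAt_div {a b : E → ℝ} {a' b' : E →L[ℝ] ℝ} {x : E}
    (ha : HasFDerivAt a a' x) (hb : HasFDerivAt b b' x) (hbne : b x ≠ 0) :
    HasFDerivAt (fun z => a z / b z) ((b x)⁻¹ • a' - (a x / (b x) ^ 2) • b') x := by
  have hinv : HasFDerivAt (fun z => (b z)⁻¹)
      ((ContinuousLinearMap.smulRight (1 : ℝ →L[ℝ] ℝ) (-((b x) ^ 2)⁻¹)).comp b') x :=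
    (hasFDerivAt_inv hbne).comp x hb
  have h := ha.mul hinv
  have : (fun z => a z / b z) = fun z => a z * (b z)⁻¹ := by
    funext z; rw [div_eq_mul_inv]
  rw [this]
  refine h.congr_fderiv ?_
  ext v
  simp [ContinuousLinearMap.smulRight_apply, div_eq_mul_inv, mul_comm, mul_assoc,
    mul_left_comm, sub_eq_add_neg]
  ring

/-- Derivative of the FP surrogate term. -/
lemma aux_hasFDerivAt_surr {a b : E → ℝ} {a' b' : E →L[ℝ] ℝ} {x : E} {c : ℝ}
    (ha : HasFDerivAt a a' x) (hb : HasFDerivAt b b' x)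
    (hapos : 0 < a x) (hbpos : 0 < b x)
    (hc : c = 1 / (2 * a x * b x)) :
    HasFDerivAt (fun z => (a z) ^ 2 * c + 1 / (4 * (b z) ^ 2 * c))
      ((b x)⁻¹ • a' - (a x / (b x) ^ 2) • b') x := by
  have hane : a x ≠ 0 := ne_of_gt hapos
  have hbne : b x ≠ 0 := ne_of_gt hbpos
  have hcne : c ≠ 0 := by
    rw [hc]; positivity
  -- first term : z ↦ a z ^ 2 * c
  have h1 : HasFDerivAt (fun z => (a z) ^ 2 * c) (c • ((a x • a') + (a x • a'))) x := by
    have hsq : HasFDerivAt (fun z => (a z) ^ 2) ((a x • a') + (a x • a')) x := by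
      have := ha.mul ha
      have heq : (fun z => (a z) ^ 2) = fun z => a z * a z := by funext z; ring
      rw [heq]; exact this
    exact hsq.mul_const c
  -- second term : z ↦ 1 / (4 * b z ^ 2 * c)
  have hdenne : 4 * (b x) ^ 2 * c ≠ 0 := by
    apply mul_ne_zero
    · positivity
    · exact hcne
  have hden : HasFDerivAt (fun z => 4 * (b z) ^ 2 * c)
      (c • ((4:ℝ) • ((b x • b') + (b x • b')))) x := by
    have hsq : HasFDerivAt (fun z => (b z) ^ 2) ((b x • b') + (b x • b')) x := by
      have := hb.mul hb
      have heq : (fun z => (b z) ^ 2) = fun z => b z * b z := by funext z; ring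
      rw [heq]; exact this
    exact (hsq.const_mul (4:ℝ)).mul_const c
  have h2 : HasFDerivAt (fun z => 1 / (4 * (b z) ^ 2 * c))
      ((ContinuousLinearMap.smulRight (1 : ℝ →L[ℝ] ℝ)
          (-((4 * (b x) ^ 2 * c) ^ 2)⁻¹)).comp
        (c • ((4:ℝ) • ((b x • b') + (b x • b'))))) x := by
    have := (hasFDerivAt_inv hdenne).comp x hden
    have heq : (fun z => 1 / (4 * (b z) ^ 2 * c)) = fun z => (4 * (b z) ^ 2 * c)⁻¹ := by
      funext z; rw [one_div]
    rw [heq]; exact this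
  have h := h1.add h2
  refine h.congr_fderiv ?_
  ext v
  simp only [ContinuousLinearMap.add_apply, ContinuousLinearMap.sub_apply,
    ContinuousLinearMap.smul_apply, ContinuousLinearMap.comp_apply,
    ContinuousLinearMap.smulRight_apply, ContinuousLinearMap.one_apply,
    smul_eq_mul]
  rw [hc]
  have h2ab : (2 * a x * b x) ≠ 0 := by positivity
  field_simp
  ring

end Aux

/-- Fixed points of the alternating minimization of the FP surrogate
`W(x,y) = G(x) + Σₙ (Aₙ(x)²·yₙ + 1/(4·Bₙ(x)²·yₙ))` are stationary points of the
original sum-of-ratios objective `H(x) = G(x) + Σₙ Aₙ(x)/Bₙ(x)`, and the surrogate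
value agrees with the original value at such points. -/
theorem fp_surrogate_stationary
    (M N : ℕ) (G : EuclideanSpace ℝ (Fin M) → ℝ)
    (A B : Fin N → EuclideanSpace ℝ (Fin M) → ℝ)
    (hG : Differentiable ℝ G)
    (hA : ∀ n, Differentiable ℝ (A n)) (hB : ∀ n, Differentiable ℝ (B n))
    (hApos : ∀ n x, 0 < A n x) (hBpos : ∀ n x, 0 < B n x)
    (xstar : EuclideanSpace ℝ (Fin M)) (ystar : Fin N → ℝ)
    (hy : ∀ n, ystar n = 1 / (2 * A n xstar * B n xstar))
    (hstat : fderiv ℝ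
        (fun x => G x + ∑ n : Fin N,
          ((A n x) ^ 2 * ystar n + 1 / (4 * (B n x) ^ 2 * ystar n))) xstar = 0) :
    fderiv ℝ (fun x => G x + ∑ n : Fin N, A n x / B n x) xstar = 0 ∧
    (G xstar + ∑ n : Fin N,
        ((A n xstar) ^ 2 * ystar n + 1 / (4 * (B n xstar) ^ 2 * ystar n)))
      = G xstar + ∑ n : Fin N, A n xstar / B n xstar := by
  set L : Fin N → (EuclideanSpace ℝ (Fin M) →L[ℝ] ℝ) := fun n =>
    (B n xstar)⁻¹ • fderiv ℝ (A n) xstar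
      - (A n xstar / (B n xstar) ^ 2) • fderiv ℝ (B n) xstar with hL
  set D : EuclideanSpace ℝ (Fin M) →L[ℝ] ℝ := fderiv ℝ G xstar + ∑ n : Fin N, L n with hD
  have hBne : ∀ n, B n xstar ≠ 0 := fun n => ne_of_gt (hBpos n xstar)
  -- the surrogate has derivative D at xstar
  have hW : HasFDerivAt (fun x => G x + ∑ n : Fin N,
      ((A n x) ^ 2 * ystar n + 1 / (4 * (B n x) ^ 2 * ystar n))) D xstar := by
    apply (hG xstar).hasFDerivAt.add
    exact HasFDerivAt.fun_sum fun n _ =>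
      aux_hasFDerivAt_surr (hA n xstar).hasFDerivAt (hB n xstar).hasFDerivAt
        (hApos n xstar) (hBpos n xstar) (hy n)
  -- the objective has derivative D at xstar
  have hH : HasFDerivAt (fun x => G x + ∑ n : Fin N, A n x / B n x) D xstar := by
    apply (hG xstar).hasFDerivAt.add
    exact HasFDerivAt.fun_sum fun n _ =>
      aux_hasFDerivAt_div (hA n xstar).hasFDerivAt (hB n xstar).hasFDerivAt (hBne n)
  have hD0 : D = 0 := by rw [← hW.fderiv]; exact hstat
  constructor
  · rw [hH.fderiv]; exact hD0
  · congr 1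
    apply Finset.sum_congr rfl
    intro n _
    have ha := ne_of_gt (hApos n xstar)
    have hb := ne_of_gt (hBpos n xstar)
    rw [hy n]
    have h2ab : (2 * A n xstar * B n xstar) ≠ 0 := by positivity
    field_simp
    ring
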